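/- Let d ≥ 2 and let K be a pure (d−1)-dimensional simplicial complex on [n] that is volume-rigid and a minimal cycle over ℤ. Then for every (d−1)-face σ of K, the complex K ∖ {σ} — obtained from K by deleting the face σ while keeping all other faces (in particular all proper subsets of σ) — is volume-rigid. -/

import Mathlib

open scoped BigOperators

section Defs

variable {α : Type*}

/-- A family of finite sets is a simplicial complex if it is closed under taking subsets. -/
def IsComplex (K : Finset (Finset α)) : Prop :=
  ∀ σ ∈ K, ∀ τ ⊆ σ, τ ∈ K

/-- `K` is pure with all facets of cardinality `d` (i.e. pure `(d-1)`-dimensional). -/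
def PureCx (d : ℕ) (K : Finset (Finset α)) : Prop :=
  (∀ σ ∈ K, σ.card ≤ d) ∧ ∀ σ ∈ K, ∃ τ ∈ K, σ ⊆ τ ∧ τ.card = d

/-- `K` is `(d-1)`-dimensional: the largest faces have `d` elements. -/
def DimPred (d : ℕ) (K : Finset (Finset α)) : Prop :=
  (∀ σ ∈ K, σ.card ≤ d) ∧ ∃ σ ∈ K, σ.card = d

/-- The increasing embedding of `Fin (d-1)` into `Fin d` skipping `r`. -/
def skipF {d : ℕ} (r : Fin d) (k : Fin (d - 1)) : Fin d :=
  if (k : ℕ) < (r : ℕ) then ⟨(k : ℕ), by have := k.isLt; omega⟩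
  else ⟨(k : ℕ) + 1, by have := k.isLt; omega⟩

/-- The cofactor `C_{r,c}(M)` (0-indexed). -/
noncomputable def cofactor {d : ℕ} (M : Matrix (Fin d) (Fin d) ℝ) (r c : Fin d) : ℝ :=
  (-1 : ℝ) ^ ((r : ℕ) + (c : ℕ)) * (M.submatrix (skipF r) (skipF c)).det

/-- The matrix `M_{p,σ}` whose `j`-th column is `(p(v_j), 1)`, `v_j` the `j`-th smallest
element of `σ`. -/
noncomputable def faceMat [LinearOrder α] (d : ℕ) (p : α → Fin (d - 1) → ℝ)
    (σ : Finset α) (hσ : σ.card = d) : Matrix (Fin d) (Fin d) ℝ :=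
  fun i j => if h : (i : ℕ) < d - 1 then p (σ.orderEmbOfFin hσ j) ⟨i, h⟩ else 1

/-- The volume-rigidity matrix `𝔙(K,p)`. -/
noncomputable def volMatrix [LinearOrder α] (d : ℕ) (K : Finset (Finset α))
    (p : α → Fin (d - 1) → ℝ) :
    Matrix (α × Fin (d - 1)) {σ : Finset α // σ ∈ K ∧ σ.card = d} ℝ :=
  fun vi σ =>
    if h : vi.1 ∈ σ.1 then
      cofactor (faceMat d p σ.1 σ.2.2) (Fin.castLE (Nat.sub_le d 1) vi.2)
        ((σ.1.orderIsoOfFin σ.2.2).symm ⟨vi.1, h⟩)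
    else 0

/-- `p : V → ℝ^{d-1}` is generic: its coordinates are algebraically independent over `ℚ`. -/
def GenericEmb (d : ℕ) (V : Finset α) (p : α → Fin (d - 1) → ℝ) : Prop :=
  AlgebraicIndependent ℚ (fun x : {a // a ∈ V} × Fin (d - 1) => p x.1.1 x.2)

/-- `K`, with vertex set `V`, is volume-rigid. -/
def VolumeRigid [Fintype α] [LinearOrder α] (d : ℕ) (V : Finset α)
    (K : Finset (Finset α)) : Prop :=
  ∀ p : α → Fin (d - 1) → ℝ, GenericEmb d V p →
    (volMatrix d K p).rank = (d - 1) * V.card - (d ^ 2 - d - 1)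

/-- `sign(τ,σ) = (-1)^j` where the unique element of `σ \ τ` is the `j`-th smallest
element of `σ` (1-based). -/
def faceSgn [LinearOrder α] (τ σ : Finset α) : ℤ :=
  if h : (σ \ τ).card = 1 then
    (-1 : ℤ) ^
      (((σ.sort (· ≤ ·)).idxOf ((σ \ τ).min' (Finset.card_pos.mp (by omega)))) + 1)
  else 0

/-- The boundary of the integral `(d-1)`-chain `z` of `K` vanishes. -/
def BoundaryZeroZ [LinearOrder α] (d : ℕ) (K : Finset (Finset α)) (z : Finset α → ℤ) : Prop :=
  ∀ τ : Finset α, τ.card = d - 1 →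
    ∑ σ ∈ K.filter (fun σ => σ.card = d ∧ τ ⊆ σ), faceSgn τ σ * z σ = 0

/-- The boundary of the real `(d-1)`-chain `z` of `K` vanishes. -/
def BoundaryZeroR [LinearOrder α] (d : ℕ) (K : Finset (Finset α)) (z : Finset α → ℝ) : Prop :=
  ∀ τ : Finset α, τ.card = d - 1 →
    ∑ σ ∈ K.filter (fun σ => σ.card = d ∧ τ ⊆ σ), (faceSgn τ σ : ℝ) * z σ = 0

/-- `K` is a minimal cycle over `ℤ`. -/
def IsMinimalCycleZ [LinearOrder α] (d : ℕ) (K : Finset (Finset α)) : Prop :=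
  (∃ z : Finset α → ℤ, (∀ σ, ¬(σ ∈ K ∧ σ.card = d) → z σ = 0) ∧
      BoundaryZeroZ d K z ∧ ∀ σ ∈ K, σ.card = d → z σ ≠ 0) ∧
  ∀ z : Finset α → ℤ, (∀ σ, ¬(σ ∈ K ∧ σ.card = d) → z σ = 0) →
    BoundaryZeroZ d K z → z ≠ 0 → ∀ σ ∈ K, σ.card = d → z σ ≠ 0

/-- `K` is `(d-1, d²-d-1)`-sparse on vertex set `V`. -/
def Sparse [DecidableEq α] (d : ℕ) (V : Finset α) (K : Finset (Finset α)) : Prop :=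
  ∀ A ⊆ V, d ≤ A.card →
    (K.filter (fun σ => σ.card = d ∧ σ ⊆ A)).card ≤ (d - 1) * A.card - (d ^ 2 - d - 1)

/-- `K` is `(d-1, d²-d-1)`-tight on vertex set `V`. -/
def Tight [DecidableEq α] (d : ℕ) (V : Finset α) (K : Finset (Finset α)) : Prop :=
  Sparse d V K ∧
    (K.filter (fun σ => σ.card = d)).card = (d - 1) * V.card - (d ^ 2 - d - 1)

end Defs

section Shifting

/-- The partial order `σ ≤_p τ`: equal cardinalities and the `i`-th smallest element of `σ`
is at most the `i`-th smallest element of `τ`, for every `i`. -/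
def pLE {n : ℕ} (σ τ : Finset (Fin n)) : Prop :=
  List.Forall₂ (· ≤ ·) (σ.sort (· ≤ ·)) (τ.sort (· ≤ ·))

/-- The strict partial order `σ <_p τ`. -/
def pLT {n : ℕ} (σ τ : Finset (Fin n)) : Prop := pLE σ τ ∧ σ ≠ τ

/-- `f_σ = f_{σ_1} ∧ ⋯ ∧ f_{σ_k}` in the exterior algebra of `ℝ^n`. -/
noncomputable def extWedge {n : ℕ} (f : Fin n → (Fin n → ℝ)) (σ : Finset (Fin n)) :
    ExteriorAlgebra ℝ (Fin n → ℝ) :=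
  ((σ.sort (· ≤ ·)).map (fun i => ExteriorAlgebra.ι ℝ (f i))).prod

/-- The standard basis of `ℝ^n`. -/
noncomputable def stdVec (n : ℕ) : Fin n → (Fin n → ℝ) := fun i => Pi.single i 1

/-- The subspace spanned by `{e_τ : τ ∉ K, |τ| = k}`. -/
noncomputable def faceIdeal {n : ℕ} (K : Finset (Finset (Fin n))) (k : ℕ) :
    Submodule ℝ (ExteriorAlgebra ℝ (Fin n → ℝ)) :=
  Submodule.span ℝ
    {x | ∃ τ : Finset (Fin n), τ ∉ K ∧ τ.card = k ∧ x = extWedge (stdVec n) τ}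

/-- The quotient map `q`. -/
noncomputable def qMap {n : ℕ} (K : Finset (Finset (Fin n))) (k : ℕ) :
    ExteriorAlgebra ℝ (Fin n → ℝ) → ExteriorAlgebra ℝ (Fin n → ℝ) ⧸ faceIdeal K k :=
  fun x => Submodule.Quotient.mk x

/-- The shifted family `Δ^<(K)` associated with a strict order `lt` on subsets of `[n]`,
computed with respect to the basis `f`. -/
def DeltaLt {n : ℕ} (K : Finset (Finset (Fin n))) (f : Fin n → (Fin n → ℝ))
    (lt : Finset (Fin n) → Finset (Fin n) → Prop) : Set (Finset (Fin n)) :=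
  {σ | qMap K σ.card (extWedge f σ) ∉
    Submodule.span ℝ (qMap K σ.card '' (extWedge f '' {τ | lt τ σ ∧ τ.card = σ.card}))}

/-- `Δ^p(K)`, computed with respect to the basis `f`. -/
def DeltaP {n : ℕ} (K : Finset (Finset (Fin n))) (f : Fin n → (Fin n → ℝ)) :
    Set (Finset (Fin n)) := DeltaLt K f pLT

/-- `f` is a generic basis of `ℝ^n`: it is a basis, `f_1 = (1,…,1)`, and the coordinates of
`f_2, …, f_n` are algebraically independent over `ℚ`. -/
def GenericBasis {n : ℕ} (f : Fin n → (Fin n → ℝ)) : Prop :=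
  (∃ b : Module.Basis (Fin n) ℝ (Fin n → ℝ), ⇑b = f) ∧
  (∀ i : Fin n, (i : ℕ) = 0 → f i = 1) ∧
  AlgebraicIndependent ℚ (fun x : {i : Fin n // (i : ℕ) ≠ 0} × Fin n => f x.1.1 x.2)

/-- The set `{1,3,4,…,d,n}` (1-based), i.e. `{0,2,3,…,d-1,n-1}` as a subset of `Fin n`. -/
def sigma0 (d n : ℕ) : Finset (Fin n) :=
  Finset.univ.filter (fun i : Fin n =>
    (i : ℕ) = 0 ∨ (2 ≤ (i : ℕ) ∧ (i : ℕ) + 1 ≤ d) ∨ (i : ℕ) + 1 = n)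

end Shifting

section Aux
variable {α : Type*} [LinearOrder α]

lemma skipF_eq {m : ℕ} (r : Fin (m+1)) (k : Fin m) : skipF r k = r.succAbove k := by
  unfold skipF Fin.succAbove
  rcases lt_or_ge (k : ℕ) (r : ℕ) with h | h
  · rw [if_pos h, if_pos (by simpa [Fin.lt_def] using h)]; rfl
  · rw [if_neg (by omega), if_neg (by simp [Fin.lt_def]; omega)]; rfl

lemma skipF_strictMono {m : ℕ} (r : Fin (m+1)) : StrictMono (skipF r) := by
  intro a b hab
  have hab' : (a : ℕ) < (b : ℕ) := hab
  unfold skipF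
  split <;> split <;> exact Fin.mk_lt_mk.mpr (by omega)

lemma skipF_ne {m : ℕ} (r : Fin (m+1)) (k : Fin m) : skipF r k ≠ r := by
  simp only [skipF]; split <;> (intro h; rw [Fin.ext_iff] at h; simp at h; omega)

lemma orderEmbOfFin_erase {σ : Finset α} {m : ℕ}
    (h : σ.card = m + 1) (c : Fin (m+1))
    (h' : (σ.erase (σ.orderEmbOfFin h c)).card = m) (k : Fin m) :
    (σ.erase (σ.orderEmbOfFin h c)).orderEmbOfFin h' k = σ.orderEmbOfFin h (skipF c k) := by
  have := Finset.orderEmbOfFin_unique h'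
    (f := fun k : Fin m => σ.orderEmbOfFin h (skipF c k)) ?_ ?_
  · exact (congrFun this k).symm
  · intro x
    rw [Finset.mem_erase]
    exact ⟨fun hh => skipF_ne c x ((σ.orderEmbOfFin h).injective hh),
      Finset.orderEmbOfFin_mem _ _ _⟩
  · exact (σ.orderEmbOfFin h).strictMono.comp (skipF_strictMono c)

lemma indexOf_sort_orderEmbOfFin {σ : Finset α} {d : ℕ}
    (h : σ.card = d) (j : Fin d) :
    (σ.sort (· ≤ ·)).idxOf (σ.orderEmbOfFin h j) = (j : ℕ) := by
  rw [Finset.orderEmbOfFin_apply]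
  exact List.Nodup.idxOf_getElem (σ.sort_nodup (· ≤ ·)) _ _

lemma faceSgn_erase {σ : Finset α} {d : ℕ} (h : σ.card = d) (c : Fin d) :
    faceSgn (σ.erase (σ.orderEmbOfFin h c)) σ = (-1 : ℤ) ^ ((c : ℕ) + 1) := by
  have hmem := Finset.orderEmbOfFin_mem σ h c
  have hsd : σ \ σ.erase (σ.orderEmbOfFin h c) = {σ.orderEmbOfFin h c} :=
    Finset.sdiff_erase_self hmem
  have hcard : (σ \ σ.erase (σ.orderEmbOfFin h c)).card = 1 := by rw [hsd]; simp
  rw [faceSgn]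
  split
  next h1 =>
    simp only [hsd, Finset.min'_singleton, indexOf_sort_orderEmbOfFin]
  next h1 => exact absurd hcard h1

/-- Sum over a finset via its order embedding. -/
lemma sum_orderEmbOfFin {σ : Finset α} {d : ℕ} (h : σ.card = d) {M : Type*}
    [AddCommMonoid M] (f : α → M) :
    ∑ v ∈ σ, f v = ∑ j : Fin d, f (σ.orderEmbOfFin h j) := by
  have himg : σ = Finset.univ.image (σ.orderEmbOfFin h) := by
    ext x
    simp only [Finset.mem_image, Finset.mem_univ, true_and]
    constructor
    · intro hx
      have h2 : x ∈ Set.range (σ.orderEmbOfFin h) := by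
        rw [Finset.range_orderEmbOfFin]; exact hx
      exact h2
    · rintro ⟨j, rfl⟩; exact Finset.orderEmbOfFin_mem σ h j
  conv_lhs => rw [himg]
  rw [Finset.sum_image (fun a _ b _ hab => (σ.orderEmbOfFin h).injective hab)]

/-- The coordinate matrix of a `(d-1)`-set. -/
noncomputable def ptMat {m : ℕ} (p : α → Fin m → ℝ) (τ : Finset α) : ℝ :=
  if h : τ.card = m then Matrix.det (fun i j : Fin m => p (τ.orderEmbOfFin h j) i) else 0

noncomputable def detFun {m : ℕ} (p : α → Fin m → ℝ) (σ : Finset α) : ℝ :=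
  if h : σ.card = m + 1 then (faceMat (m+1) p σ h).det else 0

lemma detFun_expand {m : ℕ} (p : α → Fin m → ℝ) (σ : Finset α)
    (h : σ.card = m + 1) :
    detFun p σ = ∑ j : Fin (m+1), (-1 : ℝ) ^ (m + (j : ℕ)) *
      ptMat p (σ.erase (σ.orderEmbOfFin h j)) := by
  rw [detFun, dif_pos h, Matrix.det_succ_row _ (Fin.last m)]
  refine Finset.sum_congr rfl fun j _ => ?_
  have h1 : faceMat (m+1) p σ h (Fin.last m) j = 1 := by
    simp [faceMat]
  have hc : (σ.erase (σ.orderEmbOfFin h j)).card = m := by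
    rw [Finset.card_erase_of_mem (Finset.orderEmbOfFin_mem σ h j), h]
    omega
  rw [h1, ptMat, dif_pos hc]
  have hM : (faceMat (m+1) p σ h).submatrix (Fin.last m).succAbove j.succAbove =
      (fun i k : Fin m => p ((σ.erase (σ.orderEmbOfFin h j)).orderEmbOfFin hc k) i) := by
    ext i k
    rw [Matrix.submatrix_apply, Fin.succAbove_last, faceMat,
      dif_pos (show ((Fin.castSucc i : Fin (m+1)) : ℕ) < (m+1) - 1 from i.isLt),
      orderEmbOfFin_erase h j hc k, skipF_eq]
    rfl
  rw [hM]
  simp [Fin.last]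

end Aux

section Key
variable {α : Type*} [LinearOrder α] [Fintype α]

lemma sum_erase_eq {σ : Finset α} {m : ℕ} (h : σ.card = m + 1)
    (F : Finset α → ℝ) :
    ∑ v ∈ σ, F (σ.erase v) =
      ∑ τ ∈ (Finset.powersetCard m Finset.univ).filter (· ⊆ σ), F τ := by
  refine Finset.sum_bij (fun v _ => σ.erase v) ?_ ?_ ?_ ?_
  · intro v hv
    rw [Finset.mem_filter, Finset.mem_powersetCard]
    exact ⟨⟨Finset.subset_univ _, by rw [Finset.card_erase_of_mem hv, h]; omega⟩,
      Finset.erase_subset _ _⟩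
  · intro a ha b hb hab
    by_contra hne
    have hab' : σ.erase a = σ.erase b := hab
    have : a ∈ σ.erase b := Finset.mem_erase.mpr ⟨hne, ha⟩
    rw [← hab'] at this
    exact (Finset.notMem_erase a σ) this
  · intro τ hτ
    rw [Finset.mem_filter, Finset.mem_powersetCard] at hτ
    obtain ⟨⟨-, hcard⟩, hsub⟩ := hτ
    have hne : (σ \ τ).Nonempty := by
      rw [← Finset.card_pos, Finset.card_sdiff_of_subset hsub, h, hcard]; omega
    obtain ⟨v, hv⟩ := hne
    rw [Finset.mem_sdiff] at hv
    refine ⟨v, hv.1, ?_⟩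
    refine (Finset.eq_of_subset_of_card_le (Finset.subset_erase.mpr ⟨hsub, hv.2⟩) ?_).symm
    rw [Finset.card_erase_of_mem hv.1, h, hcard]
    omega
  · intros; rfl

lemma key_identity {m : ℕ} (K : Finset (Finset α)) (z : Finset α → ℤ)
    (hb : BoundaryZeroZ (m+1) K z) (p : α → Fin m → ℝ) :
    ∑ σ ∈ K.filter (fun σ => σ.card = m + 1), (z σ : ℝ) * detFun p σ = 0 := by
  have step1 : ∀ σ ∈ K.filter (fun σ => σ.card = m + 1),
      (z σ : ℝ) * detFun p σ =
      ∑ τ ∈ (Finset.powersetCard m Finset.univ).filter (· ⊆ σ),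
        (-1 : ℝ) ^ (m + 1) * (faceSgn τ σ : ℝ) * (z σ : ℝ) * ptMat p τ := by
    intro σ hσ
    have hcard : σ.card = m + 1 := (Finset.mem_filter.mp hσ).2
    rw [detFun_expand p σ hcard, Finset.mul_sum, ← sum_erase_eq hcard,
      sum_orderEmbOfFin hcard (fun v => (-1:ℝ)^(m+1) * (faceSgn (σ.erase v) σ : ℝ) *
        (z σ : ℝ) * ptMat p (σ.erase v))]
    refine Finset.sum_congr rfl fun j _ => ?_
    rw [faceSgn_erase hcard j]
    push_cast
    rw [show ((-1:ℝ))^((j:ℕ)+1) = (-1)^(j:ℕ) * (-1) by rw [pow_succ],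
      show ((-1:ℝ))^(m+1) = (-1)^m * (-1) by rw [pow_succ], pow_add]
    ring
  rw [Finset.sum_congr rfl step1]
  have step2 : ∀ σ ∈ K.filter (fun σ => σ.card = m + 1),
      ∑ τ ∈ (Finset.powersetCard m Finset.univ).filter (· ⊆ σ),
        (-1 : ℝ) ^ (m + 1) * (faceSgn τ σ : ℝ) * (z σ : ℝ) * ptMat p τ =
      ∑ τ ∈ Finset.powersetCard m Finset.univ,
        if τ ⊆ σ then (-1 : ℝ) ^ (m + 1) * (faceSgn τ σ : ℝ) * (z σ : ℝ) * ptMat p τ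
        else 0 := fun σ _ => Finset.sum_filter _ _
  rw [Finset.sum_congr rfl step2, Finset.sum_comm]
  refine Finset.sum_eq_zero fun τ hτ => ?_
  have hτc : τ.card = m := (Finset.mem_powersetCard.mp hτ).2
  rw [← Finset.sum_filter]
  have hfilter : (K.filter (fun σ => σ.card = m + 1)).filter (fun σ => τ ⊆ σ) =
      K.filter (fun σ => σ.card = m + 1 ∧ τ ⊆ σ) := by
    rw [Finset.filter_filter]
  rw [hfilter]
  have hbτ := hb τ (by omega)
  have : ∑ σ ∈ K.filter (fun σ => σ.card = m + 1 ∧ τ ⊆ σ),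
      (-1 : ℝ) ^ (m + 1) * (faceSgn τ σ : ℝ) * (z σ : ℝ) * ptMat p τ =
      ((-1 : ℝ) ^ (m + 1) * ptMat p τ) *
        ((∑ σ ∈ K.filter (fun σ => σ.card = m + 1 ∧ τ ⊆ σ), faceSgn τ σ * z σ : ℤ) : ℝ) := by
    push_cast
    rw [Finset.mul_sum]
    exact Finset.sum_congr rfl fun σ _ => by ring
  rw [this, hbτ]
  simp

lemma det_updateCol_single {m : ℕ} (M : Matrix (Fin (m+1)) (Fin (m+1)) ℝ)
    (c : Fin (m+1)) (r0 : Fin (m+1)) :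
    (M.updateCol c (Pi.single r0 1)).det = cofactor M r0 c := by
  rw [Matrix.det_succ_column _ c]
  have hsub : ∀ r : Fin (m+1),
      (M.updateCol c (Pi.single r0 1)).submatrix r.succAbove c.succAbove =
      M.submatrix r.succAbove c.succAbove := by
    intro r
    ext a b
    rw [Matrix.submatrix_apply, Matrix.submatrix_apply,
      Matrix.updateCol_ne (Fin.succAbove_ne c b)]
  have hcol : ∀ r : Fin (m+1), (M.updateCol c (Pi.single r0 1)) r c =
      Pi.single (M := fun _ => ℝ) r0 1 r := fun r => by rw [Matrix.updateCol_self]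
  rw [Finset.sum_eq_single r0]
  · rw [hsub, hcol, cofactor]
    have : (skipF r0 : Fin ((m+1)-1) → Fin (m+1)) = r0.succAbove := funext (skipF_eq r0)
    rw [this]
    have : (skipF c : Fin ((m+1)-1) → Fin (m+1)) = c.succAbove := funext (skipF_eq c)
    rw [this, Pi.single_eq_same]
    ring_nf
  · intro r _ hr
    rw [hcol, Pi.single_eq_of_ne hr]
    ring
  · intro h; exact absurd (Finset.mem_univ r0) h

lemma detFun_update {m : ℕ} (p : α → Fin m → ℝ) (σ : Finset α) (hσ : σ.card = m + 1)
    (v : α) (i : Fin m) :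
    detFun (Function.update p v (p v + Pi.single i 1)) σ - detFun p σ =
      (if h : v ∈ σ then
        cofactor (faceMat (m+1) p σ hσ) (Fin.castLE (Nat.sub_le (m+1) 1) i)
          ((σ.orderIsoOfFin hσ).symm ⟨v, h⟩)
      else 0) := by
  set p' := Function.update p v (p v + Pi.single i 1) with hp'
  by_cases h : v ∈ σ
  · rw [dif_pos h]
    set c : Fin (m+1) := (σ.orderIsoOfFin hσ).symm ⟨v, h⟩ with hc
    have hvc : σ.orderEmbOfFin hσ c = v := by
      rw [← Finset.coe_orderIsoOfFin_apply, hc, OrderIso.apply_symm_apply]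
    have hsingle : ∀ (r : Fin (m+1)) (hr : (r : ℕ) < (m+1) - 1),
        Pi.single (M := fun _ => ℝ) (Fin.castLE (Nat.sub_le (m+1) 1) i) 1 r =
          Pi.single (M := fun _ => ℝ) i 1 (⟨(r : ℕ), hr⟩ : Fin m) := by
      intro r hr
      simp only [Pi.single_apply, Fin.ext_iff, Fin.coe_castLE]
    have hM : faceMat (m+1) p' σ hσ =
        (faceMat (m+1) p σ hσ).updateCol c
          ((fun r => faceMat (m+1) p σ hσ r c) +
            Pi.single (Fin.castLE (Nat.sub_le (m+1) 1) i) 1) := by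
      ext r j
      by_cases hj : j = c
      · subst hj
        rw [Matrix.updateCol_self, Pi.add_apply]
        simp only [faceMat]
        split
        next hr =>
          rw [hvc, hp', Function.update_self, Pi.add_apply, hsingle r hr]
        next hr =>
          rw [Pi.single_eq_of_ne (fun hh => hr (by rw [hh, Fin.coe_castLE]; exact i.isLt)),
            add_zero]
      · rw [Matrix.updateCol_ne hj]
        simp only [faceMat]
        have hne : σ.orderEmbOfFin hσ j ≠ v := by
          rw [← hvc]; exact fun hh => hj ((σ.orderEmbOfFin hσ).injective hh)
        split
        next => rw [hp', Function.update_of_ne hne]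
        next => rfl
    rw [detFun, detFun, dif_pos hσ, dif_pos hσ, hM, Matrix.det_updateCol_add,
      det_updateCol_single]
    have heq : (Matrix.updateCol (faceMat (m+1) p σ hσ) c
        fun r => faceMat (m+1) p σ hσ r c) = faceMat (m+1) p σ hσ :=
      Matrix.updateCol_eq_self _ _
    rw [heq]
    ring
  · rw [dif_neg h]
    have hM : faceMat (m+1) p' σ hσ = faceMat (m+1) p σ hσ := by
      ext r j
      simp only [faceMat]
      have hne : σ.orderEmbOfFin hσ j ≠ v :=
        fun hh => h (hh ▸ Finset.orderEmbOfFin_mem σ hσ j)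
      split
      next => rw [hp', Function.update_of_ne hne]
      next => rfl
    rw [detFun, detFun, dif_pos hσ, dif_pos hσ, hM, sub_self]
end Key

section Final
open Matrix
variable {α : Type*} [LinearOrder α] [Fintype α]

lemma volMatrix_comb_zero {m : ℕ} (K : Finset (Finset α)) (z : Finset α → ℤ)
    (hb : BoundaryZeroZ (m+1) K z) (p : α → Fin m → ℝ) (vi : α × Fin m) :
    ∑ σ : {σ : Finset α // σ ∈ K ∧ σ.card = m + 1},
      (z σ.1 : ℝ) * volMatrix (m+1) K p vi σ = 0 := by
  obtain ⟨v, i⟩ := vi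
  have h0 := key_identity K z hb p
  have h1 := key_identity K z hb (Function.update p v (p v + Pi.single i 1))
  have hsub : ∀ q : α → Fin m → ℝ,
      ∑ σ ∈ K.filter (fun σ => σ.card = m+1), (z σ : ℝ) * detFun q σ =
      ∑ σ : {σ : Finset α // σ ∈ K ∧ σ.card = m+1}, (z σ.1 : ℝ) * detFun q σ.1 :=
    fun q => Finset.sum_subtype _ (fun σ => by simp [Finset.mem_filter]) _
  rw [hsub] at h0 h1
  have hterm : ∀ σ : {σ : Finset α // σ ∈ K ∧ σ.card = m+1},
      (z σ.1 : ℝ) * volMatrix (m+1) K p (v, i) σ =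
      (z σ.1 : ℝ) * detFun (Function.update p v (p v + Pi.single i 1)) σ.1 -
        (z σ.1 : ℝ) * detFun p σ.1 := by
    intro σ
    rw [← mul_sub, detFun_update p σ.1 σ.2.2 v i]
    rfl
  rw [Finset.sum_congr rfl (fun σ _ => hterm σ), Finset.sum_sub_distrib, h0, h1, sub_zero]

theorem main_step (m : ℕ)
    (K : Finset (Finset α))
    (hrig : VolumeRigid (m+1) (Finset.univ : Finset α) K)
    (hmin : IsMinimalCycleZ (m+1) K) :
    ∀ σ ∈ K, σ.card = m+1 →
      VolumeRigid (m+1) (Finset.univ : Finset α) (K.erase σ) := by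
  intro σ₀ hσ₀K hσ₀card p hp
  obtain ⟨z, hz0, hzb, hznz⟩ := hmin.1
  have hzσ₀ : z σ₀ ≠ 0 := hznz σ₀ hσ₀K hσ₀card
  have hrank := hrig p hp
  set A := volMatrix (m+1) K p with hA
  set B := volMatrix (m+1) (K.erase σ₀) p with hB
  have hBA : ∀ c : {σ : Finset α // σ ∈ K.erase σ₀ ∧ σ.card = m+1},
      Bᵀ c = Aᵀ ⟨c.1, ⟨Finset.mem_of_mem_erase c.2.1, c.2.2⟩⟩ := by
    intro c
    funext vi
    show volMatrix (m+1) (K.erase σ₀) p vi c = volMatrix (m+1) K p vi _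
    simp only [volMatrix]
  have hkey : ∑ σ : {σ : Finset α // σ ∈ K ∧ σ.card = m+1},
      (z σ.1 : ℝ) • Aᵀ σ = 0 := by
    funext vi
    rw [Finset.sum_apply]
    simpa [smul_eq_mul] using volMatrix_comb_zero K z hzb p vi
  have hspan : Submodule.span ℝ (Set.range Bᵀ) = Submodule.span ℝ (Set.range Aᵀ) := by
    apply le_antisymm
    · rw [Submodule.span_le]
      rintro x ⟨c, rfl⟩
      rw [hBA c]
      exact Submodule.subset_span ⟨_, rfl⟩
    · rw [Submodule.span_le]
      rintro x ⟨s, rfl⟩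
      by_cases hs : s.1 = σ₀
      · have hsplit := Finset.add_sum_erase Finset.univ
          (fun σ : {σ : Finset α // σ ∈ K ∧ σ.card = m+1} => (z σ.1 : ℝ) • Aᵀ σ)
          (Finset.mem_univ s)
        rw [hkey] at hsplit
        have hcolsum : (z s.1 : ℝ) • Aᵀ s =
            -∑ σ ∈ Finset.univ.erase s, (z σ.1 : ℝ) • Aᵀ σ := by
          rw [eq_neg_iff_add_eq_zero]; exact hsplit
        have hz : (z s.1 : ℝ) ≠ 0 := Int.cast_ne_zero.mpr (hs ▸ hzσ₀)
        have : Aᵀ s = (z s.1 : ℝ)⁻¹ • ((z s.1 : ℝ) • Aᵀ s) := (inv_smul_smul₀ hz _).symm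
        rw [this, hcolsum]
        apply Submodule.smul_mem
        apply Submodule.neg_mem
        apply Submodule.sum_mem
        intro σ hσ
        apply Submodule.smul_mem
        have hσne : σ.1 ≠ σ₀ := by
          intro hh
          exact (Finset.mem_erase.mp hσ).1 (Subtype.ext (hh.trans hs.symm))
        apply Submodule.subset_span
        exact ⟨⟨σ.1, ⟨Finset.mem_erase.mpr ⟨hσne, σ.2.1⟩, σ.2.2⟩⟩, (hBA _).trans (by congr)⟩
      · apply Submodule.subset_span
        exact ⟨⟨s.1, ⟨Finset.mem_erase.mpr ⟨hs, s.2.1⟩, s.2.2⟩⟩, (hBA _).trans (by congr)⟩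
  have hfr : Set.finrank ℝ (Set.range Bᵀ) = Set.finrank ℝ (Set.range Aᵀ) := by
    unfold Set.finrank
    rw [hspan]
  have hBr : B.rank = A.rank := by
    rw [Matrix.rank_eq_finrank_span_cols B, Matrix.rank_eq_finrank_span_cols A]
    exact hfr
  rw [hBr]
  exact hrank

end Final


/-- Lemma 3.4: removing any facet from a volume-rigid minimal cycle
over `ℤ` preserves volume-rigidity. -/
theorem volumeRigid_erase_facet_of_minimalCycle (d n : ℕ) (hd : 2 ≤ d)
    (K : Finset (Finset (Fin n))) (hK : IsComplex K) (hpure : PureCx d K)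
    (hrig : VolumeRigid d (Finset.univ : Finset (Fin n)) K)
    (hmin : IsMinimalCycleZ d K) :
    ∀ σ ∈ K, σ.card = d → VolumeRigid d (Finset.univ : Finset (Fin n)) (K.erase σ) := by
  obtain ⟨m, rfl⟩ : ∃ m, d = m + 1 := ⟨d - 1, by omega⟩
  intro σ hσ hcard
  convert main_step m K hrig hmin σ hσ hcard using 2
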